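/- Let X be a finite set with |X| = m ≥ 1, P a probability distribution on X with full support, and G : X → {1, …, m} a bijection (guessing function). Then for ρ ∈ (-1,0) ∪ (0,∞) and α = 1/(1+ρ), (1/ρ)·log(∑_{x∈X} P(x)·G(x)^ρ) ≥ H_α(P) − log(1 + ln m), where H_α(P) = (1/(1-α)) log ∑_x P(x)^α, log is base 2, and ln is the natural logarithm. -/

import Mathlib

open Real Finset

private lemma holder2 {X : Type*} [Fintype X] [Nonempty X] (a b : X → ℝ)
    (ha : ∀ x, 0 < a x) (hb : ∀ x, 0 < b x) (θ : ℝ) (hθ0 : 0 < θ) (hθ1 : θ < 1) :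
    ∑ x, a x ^ θ * b x ^ (1 - θ) ≤ (∑ x, a x) ^ θ * (∑ x, b x) ^ (1 - θ) := by
  have hA : 0 < ∑ x, a x := Finset.sum_pos (fun x _ => ha x) univ_nonempty
  have hB : 0 < ∑ x, b x := Finset.sum_pos (fun x _ => hb x) univ_nonempty
  set A := ∑ x, a x
  set B := ∑ x, b x
  have key : ∀ x, a x ^ θ * b x ^ (1 - θ) ≤
      (θ * (a x / A) + (1 - θ) * (b x / B)) * (A ^ θ * B ^ (1 - θ)) := by
    intro x
    have h1 : (a x / A) ^ θ * (b x / B) ^ (1 - θ) ≤ θ * (a x / A) + (1 - θ) * (b x / B) :=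
      Real.geom_mean_le_arith_mean2_weighted hθ0.le (by linarith)
        (div_nonneg (ha x).le hA.le) (div_nonneg (hb x).le hB.le) (by ring)
    have h2 : a x ^ θ * b x ^ (1 - θ) =
        ((a x / A) ^ θ * (b x / B) ^ (1 - θ)) * (A ^ θ * B ^ (1 - θ)) := by
      rw [Real.div_rpow (ha x).le hA.le, Real.div_rpow (hb x).le hB.le]
      have hAθ : (0:ℝ) < A ^ θ := Real.rpow_pos_of_pos hA θ
      have hBθ : (0:ℝ) < B ^ (1-θ) := Real.rpow_pos_of_pos hB (1-θ)
      field_simp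
    rw [h2]
    exact mul_le_mul_of_nonneg_right h1 (by positivity)
  calc ∑ x, a x ^ θ * b x ^ (1 - θ)
      ≤ ∑ x, (θ * (a x / A) + (1 - θ) * (b x / B)) * (A ^ θ * B ^ (1 - θ)) :=
        Finset.sum_le_sum fun x _ => key x
    _ = (θ * ((∑ x, a x) / A) + (1 - θ) * ((∑ x, b x) / B)) * (A ^ θ * B ^ (1 - θ)) := by
        rw [← Finset.sum_mul]
        congr 1
        rw [Finset.sum_add_distrib, ← Finset.mul_sum, ← Finset.mul_sum, ← Finset.sum_div,
          ← Finset.sum_div]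
    _ = A ^ θ * B ^ (1 - θ) := by
        rw [div_self hA.ne', div_self hB.ne']
        ring

theorem stmt9 {X : Type*} [Fintype X]
    (m : ℕ) (hm : Fintype.card X = m) (hm1 : 1 ≤ m)
    (P : X → ℝ) (hP : ∀ x, 0 < P x) (hPsum : ∑ x, P x = 1)
    (G : X → ℕ) (hGmem : ∀ x, G x ∈ Finset.Icc 1 m)
    (hGinj : Function.Injective G)
    (ρ : ℝ) (hρ : ρ ∈ Set.Ioo (-1 : ℝ) 0 ∪ Set.Ioi (0 : ℝ))
    (α : ℝ) (hα : α = 1 / (1 + ρ)) :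
    (1 / ρ) * Real.logb 2 (∑ x, P x * (G x : ℝ) ^ ρ) ≥
      (1 / (1 - α)) * Real.logb 2 (∑ x, P x ^ α)
        - Real.logb 2 (1 + Real.log m) := by
  have hρ1 : -1 < ρ := by
    rcases hρ with h | h
    · exact h.1
    · have : (0:ℝ) < ρ := h
      linarith
  have hρ0 : ρ ≠ 0 := by
    rcases hρ with h | h
    · exact ne_of_lt h.2
    · have : (0:ℝ) < ρ := h
      exact ne_of_gt this
  have h1ρ : 0 < 1 + ρ := by linarith
  have hαρ : (1 + ρ) * α = 1 := by rw [hα]; field_simp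
  have hXne : Nonempty X := by rw [← Fintype.card_pos_iff, hm]; exact hm1
  have hGpos : ∀ x, (0 : ℝ) < (G x : ℝ) := by
    intro x
    have := (Finset.mem_Icc.mp (hGmem x)).1
    exact_mod_cast Nat.lt_of_lt_of_le Nat.zero_lt_one this
  set S := ∑ x, P x * (G x : ℝ) ^ ρ with hSdef
  set A := ∑ x, P x ^ α with hAdef
  set B := ∑ x, ((G x : ℝ))⁻¹ with hBdef
  have hS : 0 < S := Finset.sum_pos (fun x _ => by
    have := hGpos x; have := hP x; positivity) univ_nonempty
  have hA : 0 < A := Finset.sum_pos (fun x _ => Real.rpow_pos_of_pos (hP x) α) univ_nonempty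
  have hB : 0 < B := Finset.sum_pos (fun x _ => by have := hGpos x; positivity) univ_nonempty
  set C := 1 + Real.log m with hCdef
  have hC : (1:ℝ) ≤ C := by
    have : (0:ℝ) ≤ Real.log m := Real.log_nonneg (by exact_mod_cast hm1)
    simp only [hCdef]; linarith
  have hCpos : (0:ℝ) < C := lt_of_lt_of_le one_pos hC
  have hBC : B ≤ C := by
    have h1 : ∑ i ∈ Finset.image G Finset.univ, ((i : ℝ))⁻¹ = B :=
      Finset.sum_image (fun x _ y _ h => hGinj h)
    have h2 : ∑ i ∈ Finset.image G Finset.univ, ((i : ℝ))⁻¹ ≤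
        ∑ i ∈ Finset.Icc 1 m, ((i : ℝ))⁻¹ := by
      apply Finset.sum_le_sum_of_subset_of_nonneg
      · intro i hi
        simp only [Finset.mem_image] at hi
        obtain ⟨x, _, rfl⟩ := hi
        exact hGmem x
      · intro i _ _; positivity
    have h3 : ∑ i ∈ Finset.Icc 1 m, ((i : ℝ))⁻¹ = ((harmonic m : ℚ) : ℝ) := by
      rw [harmonic_eq_sum_Icc]; push_cast; rfl
    rw [← h1]
    calc _ ≤ _ := h2
      _ = ((harmonic m : ℚ) : ℝ) := h3
      _ ≤ C := harmonic_le_one_add_log m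
  have hlogBC : Real.log B ≤ Real.log C := Real.log_le_log hB hBC
  have hlog2 : 0 < Real.log 2 := Real.log_pos one_lt_two
  have hα1 : 1 / (1 - α) = (1 + ρ) / ρ := by
    rw [hα, show (1:ℝ) - 1/(1+ρ) = ρ/(1+ρ) by field_simp; ring, one_div_div]
  -- key inequality
  have hkey : 0 ≤ (1/ρ) * (Real.log S - (1 + ρ) * Real.log A + ρ * Real.log C) := by
    rcases hρ with hneg | hpos
    · -- ρ ∈ (-1, 0)
      have hρneg : ρ < 0 := hneg.2
      have hθ1 : 1 + ρ < 1 := by linarith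
      have e : ∀ x, (P x ^ α) ^ (1+ρ) * (((G x : ℝ))⁻¹) ^ (1 - (1+ρ)) =
          P x * (G x : ℝ) ^ ρ := by
        intro x
        have hg := hGpos x
        rw [← Real.rpow_mul (hP x).le, show α * (1+ρ) = 1 by linear_combination hαρ,
          Real.rpow_one, Real.inv_rpow hg.le, ← Real.rpow_neg hg.le,
          show -(1 - (1+ρ)) = ρ by ring]
      have hH : S ≤ A ^ (1+ρ) * B ^ (1 - (1+ρ)) := by
        have := holder2 (fun x => P x ^ α) (fun x => ((G x : ℝ))⁻¹)
          (fun x => Real.rpow_pos_of_pos (hP x) α)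
          (fun x => inv_pos.mpr (hGpos x)) (1+ρ) h1ρ hθ1
        calc S = ∑ x, (P x ^ α) ^ (1+ρ) * (((G x : ℝ))⁻¹) ^ (1 - (1+ρ)) := by
              rw [hSdef]; exact (Finset.sum_congr rfl fun x _ => e x).symm
          _ ≤ A ^ (1+ρ) * B ^ (1 - (1+ρ)) := this
      have hlog : Real.log S ≤ (1+ρ) * Real.log A + (1 - (1+ρ)) * Real.log B := by
        have := Real.log_le_log hS hH
        rwa [Real.log_mul (Real.rpow_pos_of_pos hA _).ne' (Real.rpow_pos_of_pos hB _).ne',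
          Real.log_rpow hA, Real.log_rpow hB] at this
      have h2 : (1 - (1+ρ)) * Real.log B ≤ (1 - (1+ρ)) * Real.log C :=
        mul_le_mul_of_nonneg_left hlogBC (by linarith)
      have hinner : Real.log S - (1 + ρ) * Real.log A + ρ * Real.log C ≤ 0 := by
        nlinarith
      have h1ρneg : (1:ℝ)/ρ ≤ 0 := by
        apply div_nonpos_of_nonneg_of_nonpos <;> linarith
      have h := mul_nonneg (neg_nonneg.mpr h1ρneg) (neg_nonneg.mpr hinner)
      rwa [neg_mul_neg] at h
    · -- ρ > 0
      have hρpos : (0:ℝ) < ρ := hpos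
      have hαpos : 0 < α := by rw [hα]; positivity
      have hαlt : α < 1 := by
        rw [hα]
        rw [div_lt_one h1ρ]
        linarith
      have e : ∀ x, (P x * (G x : ℝ) ^ ρ) ^ α * (((G x : ℝ))⁻¹) ^ (1 - α) = P x ^ α := by
        intro x
        have hg := hGpos x
        rw [Real.mul_rpow (hP x).le (Real.rpow_nonneg hg.le ρ), ← Real.rpow_mul hg.le,
          Real.inv_rpow hg.le, ← Real.rpow_neg hg.le, mul_assoc, ← Real.rpow_add hg,
          show ρ * α + -(1 - α) = 0 by linear_combination hαρ, Real.rpow_zero, mul_one]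
      have hH : A ≤ S ^ α * B ^ (1 - α) := by
        have := holder2 (fun x => P x * (G x : ℝ) ^ ρ) (fun x => ((G x : ℝ))⁻¹)
          (fun x => by have := hGpos x; have := hP x; positivity)
          (fun x => inv_pos.mpr (hGpos x)) α hαpos hαlt
        calc A = ∑ x, (P x * (G x : ℝ) ^ ρ) ^ α * (((G x : ℝ))⁻¹) ^ (1 - α) := by
              rw [hAdef]; exact (Finset.sum_congr rfl fun x _ => e x).symm
          _ ≤ S ^ α * B ^ (1 - α) := this
      have hlog : Real.log A ≤ α * Real.log S + (1 - α) * Real.log B := by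
        have := Real.log_le_log hA hH
        rwa [Real.log_mul (Real.rpow_pos_of_pos hS _).ne' (Real.rpow_pos_of_pos hB _).ne',
          Real.log_rpow hS, Real.log_rpow hB] at this
      have h2 : (1 - α) * Real.log B ≤ (1 - α) * Real.log C :=
        mul_le_mul_of_nonneg_left hlogBC (by linarith)
      have h3 : Real.log A ≤ α * Real.log S + (1 - α) * Real.log C := by linarith
      have h4 : (1+ρ) * Real.log A ≤ (1+ρ) * (α * Real.log S + (1 - α) * Real.log C) :=
        mul_le_mul_of_nonneg_left h3 h1ρ.le
      have h5 : (1+ρ) * (α * Real.log S + (1 - α) * Real.log C)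
          = Real.log S + ρ * Real.log C := by
        linear_combination (Real.log S - Real.log C) * hαρ
      have hinner : 0 ≤ Real.log S - (1 + ρ) * Real.log A + ρ * Real.log C := by
        rw [h5] at h4; linarith
      positivity
  have e1 : (1/ρ) * (Real.log S - (1 + ρ) * Real.log A + ρ * Real.log C)
      = (1/ρ) * Real.log S - ((1+ρ)/ρ) * Real.log A + Real.log C := by
    field_simp
  have hfin : ((1+ρ)/ρ) * Real.log A - Real.log C ≤ (1/ρ) * Real.log S := by
    rw [e1] at hkey; linarith
  rw [ge_iff_le, hα1, ← Real.log_div_log, ← Real.log_div_log, ← Real.log_div_log,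
    show (1+ρ)/ρ * (Real.log A / Real.log 2) - Real.log C / Real.log 2
      = ((1+ρ)/ρ * Real.log A - Real.log C) / Real.log 2 by ring,
    show (1/ρ) * (Real.log S / Real.log 2) = ((1/ρ) * Real.log S) / Real.log 2 by ring]
  gcongr
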